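/- Let φ = a|00⟩ + b|11⟩ with a,b > 0, a² + b² = 1, and a² ∈ [1/2 − √5/6, 1/2 + √5/6]. Then the operator σ̃ = P_φ − (ab/3)(4P_{ψ₁} − 𝟙), where P_{ψ₁} projects onto (|00⟩+|11⟩)/√2, is a separable state, and it is the closest separable state to P_φ in Hilbert-Schmidt norm; consequently E_HS(P_φ) = 4a²b²/3. -/

import Mathlib

open Matrix ComplexOrder Kronecker

/-- Squared Hilbert-Schmidt norm: ‖A‖²_HS = tr(A*A). -/
noncomputable def hsNormSq {n : Type*} [Fintype n] (A : Matrix n n ℂ) : ℝ :=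
  (Aᴴ * A).trace.re

/-- A density matrix: positive semidefinite with trace 1. -/
def IsDensity {n : Type*} [Fintype n] [DecidableEq n] (ρ : Matrix n n ℂ) : Prop :=
  ρ.PosSemidef ∧ ρ.trace = 1

/-- A separable (disentangled) state: a finite convex combination of
tensor products of density matrices. -/
def IsSepState {m n : Type*} [Fintype m] [Fintype n] [DecidableEq m] [DecidableEq n]
    (ρ : Matrix (m × n) (m × n) ℂ) : Prop :=
  ∃ (k : ℕ) (p : Fin k → ℝ) (ρ₁ : Fin k → Matrix m m ℂ) (ρ₂ : Fin k → Matrix n n ℂ),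
    (∀ i, 0 ≤ p i) ∧ (∑ i, p i = 1) ∧ (∀ i, IsDensity (ρ₁ i)) ∧ (∀ i, IsDensity (ρ₂ i)) ∧
    ρ = ∑ i, (p i : ℂ) • ((ρ₁ i) ⊗ₖ (ρ₂ i))

/-- The rank-one projector |v⟩⟨v| onto a vector v. -/
noncomputable def proj {n : Type*} [Fintype n] (v : n → ℂ) : Matrix n n ℂ :=
  Matrix.vecMulVec v (star v)

/-- The four Bell vectors ψ₁,ψ₂,ψ₃,ψ₄ on ℂ²⊗ℂ². -/
noncomputable def bell (i : Fin 4) (p : Fin 2 × Fin 2) : ℂ :=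
  (((Real.sqrt 2 : ℝ) : ℂ))⁻¹ *
    (if i = 0 then (if p = (0, 0) then 1 else if p = (1, 1) then 1 else 0)
     else if i = 1 then (if p = (0, 0) then 1 else if p = (1, 1) then -1 else 0)
     else if i = 2 then (if p = (0, 1) then 1 else if p = (1, 0) then 1 else 0)
     else (if p = (0, 1) then 1 else if p = (1, 0) then -1 else 0))

/-- The vector φ = a|00⟩ + b|11⟩. -/
noncomputable def phiVec (a b : ℝ) : Fin 2 × Fin 2 → ℂ :=
  fun p => if p = (0, 0) then (a : ℂ) else if p = (1, 1) then (b : ℂ) else 0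

/-! ### Auxiliary machinery -/

lemma aux_proj_posSemidef {n : Type*} [Fintype n] (v : n → ℂ) : (proj v).PosSemidef := by
  have h : proj v = (replicateRow Unit (star v))ᴴ * replicateRow Unit (star v) := by
    rw [proj, vecMulVec_eq Unit, conjTranspose_replicateRow, star_star]
  rw [h]; exact posSemidef_conjTranspose_mul_self _

lemma aux_proj_herm {n : Type*} [Fintype n] (v : n → ℂ) : (proj v)ᴴ = proj v := by
  ext i j
  simp [proj, vecMulVec, conjTranspose_apply, star_mul', mul_comm]

/-- The witness operator 4 P_{ψ₁} - 1 as an explicit matrix. -/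
def Wmat : Matrix (Fin 2 × Fin 2) (Fin 2 × Fin 2) ℂ := fun p q =>
  if p = (0,0) ∧ q = (0,0) then 1 else if p = (1,1) ∧ q = (1,1) then 1
  else if p = (0,0) ∧ q = (1,1) then 2 else if p = (1,1) ∧ q = (0,0) then 2
  else if p = q then -1 else 0

lemma aux_W_eq : (4:ℂ) • proj (bell 0) - 1 = Wmat := by
  have hs2 : Real.sqrt 2 * Real.sqrt 2 = 2 := Real.mul_self_sqrt (by norm_num)
  have hs2' : ((Real.sqrt 2 : ℝ) : ℂ)⁻¹ * ((Real.sqrt 2 : ℝ) : ℂ)⁻¹ = 2⁻¹ := by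
    rw [← mul_inv]
    norm_cast
    rw [hs2]
    norm_num
  ext ⟨i, j⟩ ⟨k, l⟩
  fin_cases i <;> fin_cases j <;> fin_cases k <;> fin_cases l <;>
    simp [proj, bell, vecMulVec, Wmat, Matrix.one_apply, Prod.ext_iff, hs2'] <;>
    norm_num

/-- P_φ as an explicit matrix. -/
def Pmat (a b : ℝ) : Matrix (Fin 2 × Fin 2) (Fin 2 × Fin 2) ℂ := fun p q =>
  if p = (0,0) ∧ q = (0,0) then (a:ℂ)*a else if p = (0,0) ∧ q = (1,1) then (a:ℂ)*b
  else if p = (1,1) ∧ q = (0,0) then (a:ℂ)*b else if p = (1,1) ∧ q = (1,1) then (b:ℂ)*b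
  else 0

lemma aux_Pmat_eq (a b : ℝ) : proj (phiVec a b) = Pmat a b := by
  ext ⟨i, j⟩ ⟨k, l⟩
  fin_cases i <;> fin_cases j <;> fin_cases k <;> fin_cases l <;>
    norm_num [proj, vecMulVec, phiVec, Pmat, Prod.ext_iff, Complex.conj_ofReal] <;>
    ring

lemma aux_herm_offdiag {M : Matrix (Fin 2) (Fin 2) ℂ} (h : M.IsHermitian) :
    M 1 0 = starRingEnd ℂ (M 0 1) := by
  have := congrFun (congrFun h.symm 1) 0
  simpa [Matrix.conjTranspose_apply] using this

lemma aux_diag_im {M : Matrix (Fin 2) (Fin 2) ℂ} (h : M.IsHermitian) (i : Fin 2) :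
    (M i i).im = 0 := by
  have := congrFun (congrFun h.symm i) i
  simp [Matrix.conjTranspose_apply, Complex.ext_iff] at this
  linarith [this]

lemma aux_minor_le {M : Matrix (Fin 2) (Fin 2) ℂ} (h : M.PosSemidef) :
    Complex.normSq (M 0 1) ≤ (M 0 0).re * (M 1 1).re := by
  have hd : M.det = (∏ i, (h.1.eigenvalues i : ℂ)) := h.1.det_eq_prod_eigenvalues
  have hre : 0 ≤ M.det.re := by
    rw [hd, Fin.prod_univ_two]
    have := h.eigenvalues_nonneg 0
    have := h.eigenvalues_nonneg 1
    rw [Complex.mul_re]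
    simp
    positivity
  rw [Matrix.det_fin_two, aux_herm_offdiag h.1] at hre
  have h00 := aux_diag_im h.1 0
  have h11 := aux_diag_im h.1 1
  simp [Complex.sub_re, Complex.mul_re, h00, h11, Complex.normSq] at hre ⊢
  nlinarith [hre]

lemma aux_prod_bound {ρ₁ ρ₂ : Matrix (Fin 2) (Fin 2) ℂ} (h1 : IsDensity ρ₁)
    (h2 : IsDensity ρ₂) :
    (((ρ₁ ⊗ₖ ρ₂) * ((4:ℂ) • proj (bell 0) - 1)).trace).re ≤ 1 := by
  rw [aux_W_eq]
  have ht1 : ρ₁ 0 0 + ρ₁ 1 1 = 1 := by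
    have := h1.2; simpa [Matrix.trace, Fin.sum_univ_two, Matrix.diag] using this
  have ht2 : ρ₂ 0 0 + ρ₂ 1 1 = 1 := by
    have := h2.2; simpa [Matrix.trace, Fin.sum_univ_two, Matrix.diag] using this
  have hm1 := aux_minor_le h1.1
  have hm2 := aux_minor_le h2.1
  have h10a := aux_herm_offdiag h1.1.1
  have h10b := aux_herm_offdiag h2.1.1
  have i1a := aux_diag_im h1.1.1 0
  have i1b := aux_diag_im h1.1.1 1
  have i2a := aux_diag_im h2.1.1 0
  have i2b := aux_diag_im h2.1.1 1
  have e1 : (ρ₁ 1 1).re = 1 - (ρ₁ 0 0).re := by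
    have := congrArg Complex.re ht1; simp at this; linarith
  have e2 : (ρ₂ 1 1).re = 1 - (ρ₂ 0 0).re := by
    have := congrArg Complex.re ht2; simp at this; linarith
  simp only [Matrix.trace, Matrix.diag, Matrix.mul_apply, Fintype.sum_prod_type,
    Fin.sum_univ_two, kroneckerMap_apply, Wmat, h10a, h10b]
  simp [Prod.ext_iff, Complex.add_re, Complex.mul_re, i1a, i1b, i2a, i2b, e1, e2,
    Complex.normSq] at hm1 hm2 ⊢
  nlinarith [hm1, hm2, sq_nonneg ((ρ₁ 0 1).re * (ρ₂ 0 1).im + (ρ₁ 0 1).im * (ρ₂ 0 1).re),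
    sq_nonneg ((ρ₁ 0 0).re * (1 - (ρ₂ 0 0).re) - (ρ₂ 0 0).re * (1 - (ρ₁ 0 0).re)),
    sq_nonneg ((ρ₁ 0 1).re * (ρ₂ 0 1).re - (ρ₁ 0 1).im * (ρ₂ 0 1).im),
    mul_nonneg (sub_nonneg.2 hm1) (sub_nonneg.2 hm2)]

lemma aux_sep_herm {ρ : Matrix (Fin 2 × Fin 2) (Fin 2 × Fin 2) ℂ} (h : IsSepState ρ) :
    ρᴴ = ρ := by
  obtain ⟨k, p, ρ₁, ρ₂, _, _, hd1, hd2, rfl⟩ := h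
  ext ⟨i, j⟩ ⟨s, t⟩
  simp only [conjTranspose_apply, Matrix.sum_apply, Matrix.smul_apply, kroneckerMap_apply,
    star_sum, star_smul]
  refine Finset.sum_congr rfl fun u _ => ?_
  have e1 : star ((ρ₁ u) s i) = (ρ₁ u) i s := by
    have := congrFun (congrFun (hd1 u).1.1 i) s
    simpa [conjTranspose_apply] using this
  have e2 : star ((ρ₂ u) t j) = (ρ₂ u) j t := by
    have := congrFun (congrFun (hd2 u).1.1 j) t
    simpa [conjTranspose_apply] using this
  simp [star_mul', e1, e2]

lemma aux_sep_bound {ρ : Matrix (Fin 2 × Fin 2) (Fin 2 × Fin 2) ℂ} (h : IsSepState ρ) :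
    ((ρ * ((4:ℂ) • proj (bell 0) - 1)).trace).re ≤ 1 := by
  obtain ⟨k, p, ρ₁, ρ₂, hp, hps, hd1, hd2, rfl⟩ := h
  rw [Finset.sum_mul, trace_sum, Complex.re_sum]
  calc ∑ i, (((p i : ℂ) • ((ρ₁ i) ⊗ₖ (ρ₂ i)) * ((4:ℂ) • proj (bell 0) - 1)).trace).re
      ≤ ∑ i, p i := by
        refine Finset.sum_le_sum fun i _ => ?_
        rw [smul_mul_assoc, trace_smul]
        have hb := aux_prod_bound (hd1 i) (hd2 i)
        have : ((p i : ℂ) • ((ρ₁ i) ⊗ₖ (ρ₂ i) * ((4:ℂ) • proj (bell 0) - 1)).trace).re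
            = p i * ((((ρ₁ i) ⊗ₖ (ρ₂ i)) * ((4:ℂ) • proj (bell 0) - 1)).trace).re := by
          simp [Complex.mul_re]
        rw [this]
        nlinarith [hp i, hb]
    _ = 1 := hps

lemma aux_hsNormSq_eq_sum {n : Type*} [Fintype n] (A : Matrix n n ℂ) :
    hsNormSq A = ∑ j, ∑ i, Complex.normSq (A i j) := by
  simp only [hsNormSq, Matrix.trace, Matrix.mul_apply, Matrix.diag, conjTranspose_apply,
    Complex.re_sum]
  refine Finset.sum_congr rfl fun j _ => Finset.sum_congr rfl fun i _ => ?_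
  simp [Complex.normSq, Complex.mul_re]

lemma aux_hsNormSq_nonneg {n : Type*} [Fintype n] (A : Matrix n n ℂ) : 0 ≤ hsNormSq A := by
  rw [aux_hsNormSq_eq_sum]
  apply Finset.sum_nonneg; intro j _
  apply Finset.sum_nonneg; intro i _
  exact Complex.normSq_nonneg _

lemma aux_hsNormSq_add {n : Type*} [Fintype n] (S T : Matrix n n ℂ) :
    hsNormSq (S + T) = hsNormSq S + hsNormSq T + 2 * ((Sᴴ * T).trace).re := by
  have h : ((Tᴴ * S).trace).re = ((Sᴴ * T).trace).re := by
    have h2 : (Tᴴ * S) = (Sᴴ * T)ᴴ := by simp [Matrix.conjTranspose_mul]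
    rw [h2, trace_conjTranspose]
    simp
  simp only [hsNormSq, conjTranspose_add, add_mul, mul_add, trace_add, Complex.add_re]
  rw [h]; ring

/-- Part 2: minimality among separable states. -/
lemma aux_part2 (a b : ℝ) (ha : 0 < a) (hb : 0 < b) (hab : a ^ 2 + b ^ 2 = 1)
    (ρ : Matrix (Fin 2 × Fin 2) (Fin 2 × Fin 2) ℂ) (hsep : IsSepState ρ) :
    hsNormSq ((proj (phiVec a b)
        - ((a * b / 3 : ℝ) : ℂ) • ((4 : ℂ) • proj (bell 0) - 1)) - proj (phiVec a b))
      ≤ hsNormSq (ρ - proj (phiVec a b)) := by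
  set c : ℝ := a * b / 3 with hc
  set W : Matrix (Fin 2 × Fin 2) (Fin 2 × Fin 2) ℂ := (4 : ℂ) • proj (bell 0) - 1 with hW
  set Pφ : Matrix (Fin 2 × Fin 2) (Fin 2 × Fin 2) ℂ := proj (phiVec a b) with hP
  have hWherm : Wᴴ = W := by
    rw [hW]
    simp [conjTranspose_smul, aux_proj_herm]
  have hcnn : 0 ≤ c := by positivity
  have hσ : (Pφ - (c : ℂ) • W) - Pφ = -((c:ℂ) • W) := by abel
  have hsplit : ρ - Pφ = (ρ - (Pφ - (c:ℂ) • W)) + -((c:ℂ) • W) := by abel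
  rw [hσ, hsplit, aux_hsNormSq_add]
  have h1 : 0 ≤ hsNormSq (ρ - (Pφ - (c:ℂ) • W)) := aux_hsNormSq_nonneg _
  have key : 0 ≤ (((ρ - (Pφ - (c:ℂ) • W))ᴴ * -((c:ℂ) • W)).trace).re := by
    have hρh : ρᴴ = ρ := aux_sep_herm hsep
    have hherm : (ρ - (Pφ - (c:ℂ) • W))ᴴ = ρ - (Pφ - (c:ℂ) • W) := by
      rw [conjTranspose_sub, hρh, conjTranspose_sub, hP, aux_proj_herm, conjTranspose_smul,
        hWherm, Complex.star_def, Complex.conj_ofReal]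
    rw [hherm]
    have hexp : (ρ - (Pφ - (c:ℂ) • W)) * -((c:ℂ) • W)
        = -((c:ℂ) • (ρ * W)) + (c:ℂ) • ((Pφ - (c:ℂ)•W) * W) := by
      simp only [sub_mul, Matrix.smul_mul, smul_sub, Matrix.mul_neg, Matrix.neg_mul, mul_neg,
        smul_neg, Matrix.mul_smul]
      abel
    rw [hexp]
    have hσW : (((Pφ - (c:ℂ)•W) * W).trace).re = 1 := by
      rw [hW, aux_W_eq]
      simp only [Matrix.trace, Matrix.diag, Matrix.mul_apply, Fintype.sum_prod_type,
        Fin.sum_univ_two, Matrix.sub_apply, Matrix.smul_apply, Wmat, hP, proj, vecMulVec,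
        phiVec]
      have hv0 : phiVec a b 0 = (a:ℂ) := by simp [phiVec, Prod.ext_iff]
      have hv1 : phiVec a b 1 = (b:ℂ) := by norm_num [phiVec, Prod.ext_iff]
      have hv00 : phiVec a b (0, 0) = (a:ℂ) := by simp [phiVec]
      have hv11 : phiVec a b (1, 1) = (b:ℂ) := by simp [phiVec]
      norm_num [Prod.ext_iff, Complex.add_re, Complex.sub_re, Complex.mul_re, hc, hv0, hv1, hv00,
        hv11]
      nlinarith [hab]
    have hρW : ((ρ * W).trace).re ≤ 1 := by rw [hW]; exact aux_sep_bound hsep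
    rw [trace_add, trace_neg, trace_smul, trace_smul]
    rw [Complex.add_re, Complex.neg_re, smul_eq_mul, smul_eq_mul, Complex.mul_re,
      Complex.mul_re, Complex.ofReal_re, Complex.ofReal_im, hσW]
    nlinarith [hρW, hcnn]
  linarith [h1, key]

set_option maxHeartbeats 1000000 in
/-- The explicit separable decomposition of σ̃. -/
lemma aux_decomp (a b c x y s p4 d : ℝ) (hb : 0 < b) (hdne : d ≠ 0)
    (hc : c = a*b/3) (hd : d = b^2 - c)
    (hx2 : x^2 = c/b^2) (hy2 : y^2 = d/b^2)
    (hs : s = b^4/d) (hp4 : p4 = a^2 - c - c^2/d) :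
    Pmat a b - ((c : ℝ) : ℂ) • Wmat
      = ∑ i : Fin 5, ((![s/4, s/4, s/4, s/4, p4] i : ℝ) : ℂ) •
          ((![!![(x:ℂ)*x, (x:ℂ)*y; (x:ℂ)*y, (y:ℂ)*y],
              !![(x:ℂ)*x, -(Complex.I*((x:ℂ)*y)); Complex.I*((x:ℂ)*y), (y:ℂ)*y],
              !![(x:ℂ)*x, -((x:ℂ)*y); -((x:ℂ)*y), (y:ℂ)*y],
              !![(x:ℂ)*x, Complex.I*((x:ℂ)*y); -(Complex.I*((x:ℂ)*y)), (y:ℂ)*y],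
              !![(1:ℂ), 0; 0, 0]] i) ⊗ₖ
           (![!![(x:ℂ)*x, (x:ℂ)*y; (x:ℂ)*y, (y:ℂ)*y],
              !![(x:ℂ)*x, Complex.I*((x:ℂ)*y); -(Complex.I*((x:ℂ)*y)), (y:ℂ)*y],
              !![(x:ℂ)*x, -((x:ℂ)*y); -((x:ℂ)*y), (y:ℂ)*y],
              !![(x:ℂ)*x, -(Complex.I*((x:ℂ)*y)); Complex.I*((x:ℂ)*y), (y:ℂ)*y],
              !![(1:ℂ), 0; 0, 0]] i)) := by
  have hbC : (b:ℂ) ≠ 0 := by exact_mod_cast hb.ne'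
  have hdCne : (d:ℂ) ≠ 0 := by exact_mod_cast hdne
  have cast_eq : ∀ u v : ℝ, u = v → ((u:ℝ):ℂ) = ((v:ℝ):ℂ) := fun u v h => by rw [h]
  have hcC := cast_eq _ _ hc
  have hdC := cast_eq _ _ hd
  have hx2C := cast_eq _ _ hx2
  have hy2C := cast_eq _ _ hy2
  have hsC := cast_eq _ _ hs
  have hp4C := cast_eq _ _ hp4
  push_cast at hcC hdC hx2C hy2C hsC hp4C
  have hbcC : ((b:ℂ)^2 - (c:ℝ)) ≠ 0 := by rw [← hdC]; exact hdCne
  have hx4C : ((x:ℂ))^4 = ((c:ℝ)/(b:ℂ)^2)^2 := by rw [← hx2C]; ring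
  have hy4C : ((y:ℂ))^4 = ((d:ℂ)/(b:ℂ)^2)^2 := by rw [← hy2C]; ring
  ext ⟨i, j⟩ ⟨k, l⟩
  fin_cases i <;> fin_cases j <;> fin_cases k <;> fin_cases l <;>
  · simp only [Matrix.sum_apply, Fin.sum_univ_five, Matrix.smul_apply, kroneckerMap_apply,
      Matrix.sub_apply, Matrix.cons_val_zero, Matrix.cons_val_one, Matrix.cons_val_two,
      Matrix.cons_val_three, Matrix.cons_val_four, Matrix.tail_cons, Matrix.head_cons, Matrix.cons_val', Matrix.cons_val_fin_one, Matrix.empty_val',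
      Matrix.of_apply, Wmat, Pmat, Prod.mk.injEq, Fin.isValue, Fin.zero_eta, Fin.mk_one]
    norm_num [hsC, hp4C]
    try push_cast
    try ring_nf
    try simp only [Complex.I_sq]
    try ring_nf
    try simp only [hx2C, hy2C, hx4C, hy4C]
    try ring_nf
    try field_simp
    try ring
    try (simp only [hdC]; try field_simp; try ring)
    try linear_combination ((d:ℂ)) * hdC
    try linear_combination ((b:ℂ)^2) * hdC
    try linear_combination hdC
    try linear_combination (3:ℂ) * hcC
    try linear_combination (-3:ℂ) * hcC
    try linear_combination hcC
    try linear_combination -hcC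
    try ring

set_option maxHeartbeats 1600000 in
/-- Part 1: σ̃ is a separable state. -/
lemma aux_part1 (a b : ℝ) (ha : 0 < a) (hb : 0 < b) (hab : a ^ 2 + b ^ 2 = 1)
    (hrange : a ^ 2 ∈ Set.Icc (1 / 2 - Real.sqrt 5 / 6) (1 / 2 + Real.sqrt 5 / 6)) :
    IsSepState (proj (phiVec a b)
        - ((a * b / 3 : ℝ) : ℂ) • ((4 : ℂ) • proj (bell 0) - 1)) := by
  obtain ⟨hr1, hr2⟩ := hrange
  have h5 : (Real.sqrt 5)^2 = 5 := Real.sq_sqrt (by norm_num)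
  have h5nn : 0 ≤ Real.sqrt 5 := Real.sqrt_nonneg 5
  have h5lt : Real.sqrt 5 < 2.4 := by nlinarith
  set c : ℝ := a * b / 3 with hc
  set d : ℝ := b^2 - c with hd
  -- basic inequalities
  have hab13 : 1/3 ≤ a * b := by
    have h2 : a^2 * b^2 ≥ 1/9 := by nlinarith
    nlinarith [mul_pos ha hb]
  have hdpos : 0 < d := by
    have hb2 : b^2 = 1 - a^2 := by linarith
    have h3ba : a < 3 * b := by nlinarith
    have : a * b < 3 * b^2 := by nlinarith
    simp only [hd, hc]
    nlinarith
  have hcpos : 0 < c := by positivity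
  have hb2pos : (0:ℝ) < b^2 := by positivity
  set x : ℝ := Real.sqrt (c/b^2) with hxdef
  set y : ℝ := Real.sqrt (d/b^2) with hydef
  have hx2 : x^2 = c/b^2 := Real.sq_sqrt (by positivity)
  have hy2 : y^2 = d/b^2 := Real.sq_sqrt (by positivity)
  set s : ℝ := b^4/d with hs
  set p4 : ℝ := a^2 - c - c^2/d with hp4
  have hspos : 0 < s := by positivity
  have hp4nn : 0 ≤ p4 := by
    have hnum : 0 ≤ (a^2 - c) * d - c^2 := by
      have : (a^2 - c) * d - c^2 = a^2*b^2 - c * (a^2 + b^2) := by rw [hd]; ring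
      rw [this, hab]
      nlinarith
    have : p4 = ((a^2 - c) * d - c^2)/d := by rw [hp4]; field_simp
    rw [this]
    positivity
  have hxy1 : x^2 + y^2 = 1 := by
    rw [hx2, hy2, hd]
    field_simp
    ring
  have hxy1C : ((x:ℂ))*x + (y:ℂ)*y = 1 := by
    have : ((x^2 + y^2 : ℝ) : ℂ) = ((1:ℝ):ℂ) := by rw [hxy1]
    push_cast at this
    linear_combination this
  refine ⟨5, ![s/4, s/4, s/4, s/4, p4],
    ![!![(x:ℂ)*x, (x:ℂ)*y; (x:ℂ)*y, (y:ℂ)*y],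
      !![(x:ℂ)*x, -(Complex.I*((x:ℂ)*y)); Complex.I*((x:ℂ)*y), (y:ℂ)*y],
      !![(x:ℂ)*x, -((x:ℂ)*y); -((x:ℂ)*y), (y:ℂ)*y],
      !![(x:ℂ)*x, Complex.I*((x:ℂ)*y); -(Complex.I*((x:ℂ)*y)), (y:ℂ)*y],
      !![(1:ℂ), 0; 0, 0]],
    ![!![(x:ℂ)*x, (x:ℂ)*y; (x:ℂ)*y, (y:ℂ)*y],
      !![(x:ℂ)*x, Complex.I*((x:ℂ)*y); -(Complex.I*((x:ℂ)*y)), (y:ℂ)*y],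
      !![(x:ℂ)*x, -((x:ℂ)*y); -((x:ℂ)*y), (y:ℂ)*y],
      !![(x:ℂ)*x, -(Complex.I*((x:ℂ)*y)); Complex.I*((x:ℂ)*y), (y:ℂ)*y],
      !![(1:ℂ), 0; 0, 0]], ?_, ?_, ?_, ?_, ?_⟩
  · intro i
    have hs4 : (0:ℝ) ≤ s/4 := by positivity
    fin_cases i <;>
      simp only [Matrix.cons_val_zero, Matrix.cons_val_one, Matrix.head_cons,
        Matrix.cons_val', Matrix.cons_val_fin_one, Matrix.empty_val', Fin.isValue] <;>
      first | exact hs4 | exact hp4nn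
  · rw [Fin.sum_univ_five]
    simp only [Matrix.cons_val_zero, Matrix.cons_val_one, Matrix.cons_val_two,
      Matrix.cons_val_three, Matrix.cons_val_four, Matrix.head_cons, Matrix.tail_cons,
      Matrix.cons_val_fin_one, Matrix.cons_val', Matrix.empty_val']
    have hb4 : b^4 = (b^2+c)*d + c^2 := by rw [hd]; ring
    have hsval : s = (b^2 + c) + c^2/d := by
      rw [hs, hb4]
      field_simp
    rw [hp4]
    linarith [hab, hsval]
  · intro i
    constructor
    · fin_cases i
      · exact (show !![(x:ℂ)*x, (x:ℂ)*y; (x:ℂ)*y, (y:ℂ)*y] = proj ![(x:ℂ), (y:ℂ)] by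
          ext i j
          fin_cases i <;> fin_cases j <;>
            simp [proj, vecMulVec, Complex.conj_ofReal] <;>
            try ring) ▸ aux_proj_posSemidef _
      · exact (show !![(x:ℂ)*x, -(Complex.I*((x:ℂ)*y)); Complex.I*((x:ℂ)*y), (y:ℂ)*y]
            = proj ![(x:ℂ), Complex.I*(y:ℝ)] by
          ext i j
          fin_cases i <;> fin_cases j <;>
            simp [proj, vecMulVec, Complex.conj_ofReal, star_mul', Complex.ext_iff] <;>
            ring) ▸ aux_proj_posSemidef _
      · exact (show !![(x:ℂ)*x, -((x:ℂ)*y); -((x:ℂ)*y), (y:ℂ)*y]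
            = proj ![(x:ℂ), -(y:ℂ)] by
          ext i j
          fin_cases i <;> fin_cases j <;>
            simp [proj, vecMulVec, Complex.conj_ofReal] <;> ring) ▸ aux_proj_posSemidef _
      · exact (show !![(x:ℂ)*x, Complex.I*((x:ℂ)*y); -(Complex.I*((x:ℂ)*y)), (y:ℂ)*y]
            = proj ![(x:ℂ), -(Complex.I*(y:ℝ))] by
          ext i j
          fin_cases i <;> fin_cases j <;>
            simp [proj, vecMulVec, Complex.conj_ofReal, star_mul', Complex.ext_iff] <;>
            ring) ▸ aux_proj_posSemidef _
      · exact (show !![(1:ℂ), 0; 0, 0] = proj ![(1:ℂ), 0] by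
          ext i j
          fin_cases i <;> fin_cases j <;> simp [proj, vecMulVec]) ▸ aux_proj_posSemidef _
    · fin_cases i <;>
        simp [Matrix.trace, Fin.sum_univ_two, Matrix.diag] <;>
        exact hxy1C
  · intro i
    constructor
    · fin_cases i
      · exact (show !![(x:ℂ)*x, (x:ℂ)*y; (x:ℂ)*y, (y:ℂ)*y] = proj ![(x:ℂ), (y:ℂ)] by
          ext i j
          fin_cases i <;> fin_cases j <;>
            simp [proj, vecMulVec, Complex.conj_ofReal] <;>
            try ring) ▸ aux_proj_posSemidef _
      · exact (show !![(x:ℂ)*x, Complex.I*((x:ℂ)*y); -(Complex.I*((x:ℂ)*y)), (y:ℂ)*y]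
            = proj ![(x:ℂ), -(Complex.I*(y:ℝ))] by
          ext i j
          fin_cases i <;> fin_cases j <;>
            simp [proj, vecMulVec, Complex.conj_ofReal, star_mul', Complex.ext_iff] <;>
            ring) ▸ aux_proj_posSemidef _
      · exact (show !![(x:ℂ)*x, -((x:ℂ)*y); -((x:ℂ)*y), (y:ℂ)*y]
            = proj ![(x:ℂ), -(y:ℂ)] by
          ext i j
          fin_cases i <;> fin_cases j <;>
            simp [proj, vecMulVec, Complex.conj_ofReal] <;> ring) ▸ aux_proj_posSemidef _
      · exact (show !![(x:ℂ)*x, -(Complex.I*((x:ℂ)*y)); Complex.I*((x:ℂ)*y), (y:ℂ)*y]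
            = proj ![(x:ℂ), Complex.I*(y:ℝ)] by
          ext i j
          fin_cases i <;> fin_cases j <;>
            simp [proj, vecMulVec, Complex.conj_ofReal, star_mul', Complex.ext_iff] <;>
            ring) ▸ aux_proj_posSemidef _
      · exact (show !![(1:ℂ), 0; 0, 0] = proj ![(1:ℂ), 0] by
          ext i j
          fin_cases i <;> fin_cases j <;> simp [proj, vecMulVec]) ▸ aux_proj_posSemidef _
    · fin_cases i <;>
        simp [Matrix.trace, Fin.sum_univ_two, Matrix.diag] <;>
        exact hxy1C
  · rw [aux_Pmat_eq, aux_W_eq]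
    exact aux_decomp a b c x y s p4 d hb hdpos.ne' hc hd hx2 hy2 hs hp4

set_option maxHeartbeats 1600000 in
theorem basepoint_of_pure_state (a b : ℝ) (ha : 0 < a) (hb : 0 < b)
    (hab : a ^ 2 + b ^ 2 = 1)
    (hrange : a ^ 2 ∈ Set.Icc (1 / 2 - Real.sqrt 5 / 6) (1 / 2 + Real.sqrt 5 / 6)) :
    IsSepState (proj (phiVec a b)
        - ((a * b / 3 : ℝ) : ℂ) • ((4 : ℂ) • proj (bell 0) - 1))
    ∧ (∀ ρ, IsSepState ρ →
        hsNormSq ((proj (phiVec a b)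
            - ((a * b / 3 : ℝ) : ℂ) • ((4 : ℂ) • proj (bell 0) - 1)) - proj (phiVec a b))
          ≤ hsNormSq (ρ - proj (phiVec a b)))
    ∧ hsNormSq ((proj (phiVec a b)
          - ((a * b / 3 : ℝ) : ℂ) • ((4 : ℂ) • proj (bell 0) - 1)) - proj (phiVec a b))
        = 4 * a ^ 2 * b ^ 2 / 3 := by
  refine ⟨aux_part1 a b ha hb hab hrange,
    fun ρ hρ => aux_part2 a b ha hb hab ρ hρ, ?_⟩
  have h2 : Real.sqrt 2 * Real.sqrt 2 = 2 := Real.mul_self_sqrt (by norm_num)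
  rw [sub_sub_cancel_left, aux_hsNormSq_eq_sum]
  simp only [Fintype.sum_prod_type, Fin.sum_univ_two]
  simp [proj, bell, vecMulVec, Matrix.one_apply, Complex.normSq, Prod.ext_iff,
    Complex.ext_iff, Complex.div_re, Complex.div_im]
  field_simp
  nlinarith [Real.sqrt_nonneg 2, sq_nonneg (a*b)]
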